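/- Define K(s) = 4s − (1 + s²) log|(s+1)/(s−1)| for s > 0, s ≠ 1. Then: (i) K(s) = s² K(1/s) for every s > 0 with s ≠ 1; and (ii) there exist constants a ∈ (0, 1) and C > 0 such that for every s > 0 with s ≠ 1: K(s) ≥ s − C · log|(s+1)/(s−1)| · 1_{{a ≤ s ≤ 1/a}}. -/

import Mathlib

open Real Set

/-- The interaction kernel `K(s) = 4s - (1 + s²) log|(s+1)/(s-1)|` arising in the
estimate of `u_x(π/2)` in Section 3.2. -/
noncomputable def Kkernel (s : ℝ) : ℝ :=
  4 * s - (1 + s ^ 2) * Real.log |(s + 1) / (s - 1)|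

lemma Klog_nonneg (s : ℝ) (hs : 0 < s) (hs1 : s ≠ 1) :
    0 ≤ Real.log |(s + 1) / (s - 1)| := by
  have h1 : s - 1 ≠ 0 := sub_ne_zero.mpr hs1
  have habs : (0:ℝ) < |s - 1| := abs_pos.mpr h1
  apply Real.log_nonneg
  rw [abs_div, abs_of_pos (by linarith : (0:ℝ) < s + 1)]
  rw [le_div_iff₀ habs, one_mul]
  exact abs_le.mpr ⟨by linarith, by linarith⟩

/-- (i) the symmetry `K(s) = s² K(1/s)`; (ii) the lower bound
`K(s) ≥ s - C log|(s+1)/(s-1)| 1_{a ≤ s ≤ 1/a}` for some `a ∈ (0,1)`, `C > 0`. -/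
theorem Kkernel_symm_and_lower_bound :
    (∀ s : ℝ, 0 < s → s ≠ 1 → Kkernel s = s ^ 2 * Kkernel (1 / s)) ∧
    (∃ a : ℝ, a ∈ Ioo (0 : ℝ) 1 ∧ ∃ C : ℝ, 0 < C ∧
      ∀ s : ℝ, 0 < s → s ≠ 1 →
        Kkernel s
          ≥ s - C * Real.log |(s + 1) / (s - 1)|
              * (if a ≤ s ∧ s ≤ 1 / a then 1 else 0)) := by
  constructor
  · intro s hs hs1
    have hs0 : s ≠ 0 := ne_of_gt hs
    have h1 : s - 1 ≠ 0 := sub_ne_zero.mpr hs1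
    have habs : (1 / s + 1) / (1 / s - 1) = (1 + s) / (1 - s) := by
      rw [div_eq_div_iff (by simpa using sub_ne_zero.mpr (by simpa [eq_comm, eq_div_iff hs0] using hs1 : (1:ℝ)/s ≠ 1)) (sub_ne_zero.mpr (fun h => hs1 (by linarith)))]
      field_simp
    have hlog : Real.log |(1 / s + 1) / (1 / s - 1)| = Real.log |(s + 1) / (s - 1)| := by
      rw [habs, abs_div, abs_div, abs_sub_comm 1 s, add_comm 1 s]
    unfold Kkernel
    rw [hlog]
    field_simp
    ring
  · refine ⟨1/4, ⟨by norm_num, by norm_num⟩, 17, by norm_num, ?_⟩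
    intro s hs hs1
    have h1 : s - 1 ≠ 0 := sub_ne_zero.mpr hs1
    have hL0 : 0 ≤ Real.log |(s + 1) / (s - 1)| := Klog_nonneg s hs hs1
    by_cases h : (1/4 : ℝ) ≤ s ∧ s ≤ 1 / (1/4)
    · rw [if_pos h, mul_one]
      unfold Kkernel
      have hs4 : s ≤ 4 := by linarith [h.2]
      nlinarith [mul_nonneg (by nlinarith : (0:ℝ) ≤ 17 - 1 - s^2) hL0]
    · rw [if_neg h, mul_zero, sub_zero]
      unfold Kkernel
      rcases not_and_or.mp h with h | h
      · push_neg at h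
        -- s < 1/4
        have hlt : s < 1 := by linarith
        have hpos : (0:ℝ) < (s + 1) / (s - 1) * (-1) := by
          apply mul_pos_of_neg_of_neg
          · exact div_neg_of_pos_of_neg (by linarith) (by linarith)
          · norm_num
        have habs : |(s + 1) / (s - 1)| = (1 + s) / (1 - s) := by
          rw [abs_div, abs_of_pos (by linarith : (0:ℝ) < s + 1),
            abs_of_neg (by linarith : s - 1 < 0)]
          rw [add_comm]; ring_nf
        rw [habs]
        have hx : (0:ℝ) < (1 + s) / (1 - s) := div_pos (by linarith) (by linarith)
        have hlog := Real.log_le_sub_one_of_pos hx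
        have hle : (1 + s) / (1 - s) - 1 = 2 * s / (1 - s) := by
          rw [div_sub_one (by linarith : (1:ℝ) - s ≠ 0)]
          congr 1; ring
        rw [hle] at hlog
        have hub : 2 * s / (1 - s) ≤ 3 * s / (1 + s^2) := by
          rw [div_le_div_iff₀ (by linarith) (by positivity)]
          nlinarith
        have hL : Real.log ((1 + s) / (1 - s)) ≤ 3 * s / (1 + s^2) :=
          hlog.trans hub
        have h2 : (1 + s^2) * Real.log ((1 + s) / (1 - s)) ≤ 3 * s := by
          rw [← mul_le_mul_iff_right₀ (by positivity : (0:ℝ) < 1 + s^2)] at hL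
          calc (1 + s^2) * Real.log ((1 + s) / (1 - s)) ≤ (1 + s^2) * (3 * s / (1 + s^2)) := hL
            _ = 3 * s := by field_simp
        linarith
      · push_neg at h
        -- s > 4
        have hgt : (4:ℝ) < s := by norm_num at h; linarith
        have habs : |(s + 1) / (s - 1)| = (s + 1) / (s - 1) := by
          rw [abs_of_pos (div_pos (by linarith) (by linarith))]
        rw [habs]
        have hx : (0:ℝ) < (s + 1) / (s - 1) := div_pos (by linarith) (by linarith)
        have hlog := Real.log_le_sub_one_of_pos hx
        have hle : (s + 1) / (s - 1) - 1 = 2 / (s - 1) := by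
          rw [div_sub_one h1]
          congr 1; ring
        rw [hle] at hlog
        have hub : 2 / (s - 1) ≤ 3 * s / (1 + s^2) := by
          rw [div_le_div_iff₀ (by linarith) (by positivity)]
          nlinarith
        have hL : Real.log ((s + 1) / (s - 1)) ≤ 3 * s / (1 + s^2) :=
          hlog.trans hub
        have h2 : (1 + s^2) * Real.log ((s + 1) / (s - 1)) ≤ 3 * s := by
          calc (1 + s^2) * Real.log ((s + 1) / (s - 1))
              ≤ (1 + s^2) * (3 * s / (1 + s^2)) := by
                exact mul_le_mul_of_nonneg_left hL (by positivity)
            _ = 3 * s := by field_simp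
        linarith
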